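/- A nonzero continuous function φ : ℝ → ℂ satisfies (φ(x+y) + φ(x−y))/2 = φ(x)·φ(y) for all x, y ∈ ℝ if and only if there exists λ ∈ ℂ such that φ(x) = cos(λx) for all x ∈ ℝ (where cos of a complex argument is the entire extension, and the constant function 1 corresponds to λ = 0). -/

import Mathlib

open intervalIntegral in
lemma cauchy_exp_aux (g : ℝ → ℂ) (hc : Continuous g) (h0 : g 0 = 1)
    (hm : ∀ x y : ℝ, g (x + y) = g x * g y) :
    ∃ k : ℂ, ∀ x : ℝ, g x = Complex.exp (k * x) := by
  -- find δ > 0 with small oscillation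
  obtain ⟨ε, hεpos, hε⟩ := Metric.continuousAt_iff.mp (hc.continuousAt (x := 0)) (1/2) (by norm_num)
  set δ : ℝ := ε / 2 with hδdef
  have hδpos : 0 < δ := by positivity
  have hsmall : ∀ t ∈ Set.Icc (0:ℝ) δ, ‖g t - 1‖ ≤ 1/2 := by
    intro t ht
    have : dist t 0 < ε := by
      rw [Real.dist_eq, sub_zero, abs_of_nonneg ht.1]
      linarith [ht.2]
    have := le_of_lt (hε this)
    rwa [dist_eq_norm, h0] at this
  set J : ℂ := ∫ t in (0:ℝ)..δ, g t with hJdef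
  have hint : IntervalIntegrable g MeasureTheory.volume 0 δ := hc.intervalIntegrable _ _
  have hJδ : ‖J - δ‖ ≤ δ/2 := by
    have h1 : J - δ = ∫ t in (0:ℝ)..δ, (g t - 1) := by
      rw [intervalIntegral.integral_sub hint (intervalIntegrable_const)]
      simp [hJdef]
    rw [h1]
    have := intervalIntegral.norm_integral_le_of_norm_le_const
      (C := 1/2) (f := fun t => g t - 1) (a := (0:ℝ)) (b := δ) ?_
    · calc ‖∫ t in (0:ℝ)..δ, (g t - 1)‖ ≤ 1/2 * |δ - 0| := this
        _ = δ/2 := by rw [sub_zero, abs_of_pos hδpos]; ring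
    · intro t ht
      rw [Set.uIoc_of_le hδpos.le] at ht
      exact hsmall t ⟨ht.1.le, ht.2⟩
  have hJ : J ≠ 0 := by
    intro h
    rw [h, zero_sub, norm_neg] at hJδ
    simp only [Complex.norm_real, Real.norm_eq_abs, abs_of_pos hδpos] at hJδ
    linarith
  -- key identity : g u * J = ∫ u..u+δ
  have hkey : ∀ u : ℝ, g u * J = ∫ t in u..(u+δ), g t := by
    intro u
    calc g u * J = ∫ t in (0:ℝ)..δ, g u * g t := (intervalIntegral.integral_const_mul _ _).symm
      _ = ∫ t in (0:ℝ)..δ, g (u + t) := by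
          refine intervalIntegral.integral_congr fun t _ => ?_
          rw [hm]
      _ = ∫ t in u..(u+δ), g t := by
          rw [intervalIntegral.integral_comp_add_left g u, add_zero]
  -- derivative of G
  set G : ℝ → ℂ := fun y => ∫ t in (0:ℝ)..y, g t with hGdef
  have hG : ∀ y : ℝ, HasDerivAt G (g y) y := by
    intro y
    exact (intervalIntegral.integral_hasStrictDerivAt_right
      (hc.intervalIntegrable _ _) (hc.stronglyMeasurableAtFilter MeasureTheory.volume _) hc.continuousAt).hasDerivAt
  have hgG : ∀ u : ℝ, g u = (G (u + δ) - G u) / J := by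
    intro u
    have : G (u + δ) - G u = ∫ t in u..(u+δ), g t := by
      rw [hGdef]
      have := intervalIntegral.integral_add_adjacent_intervals (μ := MeasureTheory.volume)
        (hc.intervalIntegrable (0:ℝ) u) (hc.intervalIntegrable u (u+δ))
      show (∫ t in (0:ℝ)..(u+δ), g t) - (∫ t in (0:ℝ)..u, g t) = ∫ t in u..(u+δ), g t
      rw [← this]; ring
    rw [this, ← hkey u, mul_div_assoc, div_self hJ, mul_one]
  set k : ℂ := (g δ - 1) / J with hkdef
  have hd : ∀ x : ℝ, HasDerivAt g (k * g x) x := by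
    intro x
    have h1 : HasDerivAt (fun u => (G (u + δ) - G u) / J) ((g (x + δ) - g x)/J) x := by
      have hA : HasDerivAt (fun u : ℝ => G (u + δ)) (g (x + δ)) x :=
        HasDerivAt.comp_add_const x δ (hG (x + δ))
      exact (hA.sub (hG x)).div_const J
    have h2 : HasDerivAt g ((g (x + δ) - g x)/J) x := by
      refine h1.congr_of_eventuallyEq (Filter.Eventually.of_forall fun u => ?_)
      exact hgG u
    convert h2 using 1
    rw [hkdef, hm x δ]
    field_simp
  -- conclude
  have hconst : ∀ x : ℝ, g x * Complex.exp (-(k * x)) = 1 := by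
    have hF : ∀ x : ℝ, HasDerivAt (fun u : ℝ => g u * Complex.exp (-(k * u))) 0 x := by
      intro x
      have he : HasDerivAt (fun u : ℝ => Complex.exp (-(k * u))) (-k * Complex.exp (-(k * x))) x := by
        have hz : HasDerivAt (fun z : ℂ => Complex.exp (-(k * z)))
            (-k * Complex.exp (-(k * (x:ℂ)))) (x:ℂ) := by
          have := (Complex.hasDerivAt_exp (-(k * (x:ℂ)))).comp (x:ℂ)
            (((hasDerivAt_id (x:ℂ)).const_mul k).neg)
          simpa [mul_comm, Function.comp_def, Pi.neg_def] using this
        exact hz.comp_ofReal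
      have := (hd x).mul he
      rw [show (0:ℂ) = k * g x * Complex.exp (-(k * ↑x)) + g x * (-k * Complex.exp (-(k * ↑x))) by ring]
      exact this
    have : ∀ x : ℝ, (fun u : ℝ => g u * Complex.exp (-(k * u))) x
        = (fun u : ℝ => g u * Complex.exp (-(k * u))) 0 :=
      fun x => is_const_of_deriv_eq_zero (fun y => (hF y).differentiableAt)
        (fun y => (hF y).deriv) x 0
    intro x
    have h := this x
    simpa [h0] using h
  refine ⟨k, fun x => ?_⟩
  have h2 : g x = (g x * Complex.exp (-(k * ↑x))) * Complex.exp (k * ↑x) := by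
    rw [mul_assoc, ← Complex.exp_add, neg_add_cancel, Complex.exp_zero, mul_one]
  rw [h2, hconst x, one_mul]

/-- The d'Alembert (cosine) functional equation: a nonzero continuous function
`φ : ℝ → ℂ` satisfies `(φ(x+y) + φ(x−y))/2 = φ(x)·φ(y)` for all `x, y` if and only if
there exists `λ ∈ ℂ` with `φ(x) = cos(λ x)` for all `x`. -/
theorem stmt_0 (φ : ℝ → ℂ) (hcont : Continuous φ) (hne : φ ≠ 0) :
    (∀ x y : ℝ, (φ (x + y) + φ (x - y)) / 2 = φ x * φ y) ↔
      ∃ l : ℂ, ∀ x : ℝ, φ x = Complex.cos (l * x) := by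
  constructor
  · intro heq
    -- φ 0 = 1
    have h0 : φ 0 = 1 := by
      have h00 := heq 0 0
      simp only [add_zero, sub_zero] at h00
      have hz : φ 0 * (φ 0 - 1) = 0 := by linear_combination -h00
      rcases mul_eq_zero.mp hz with h | h
      · exfalso
        apply hne
        funext x
        have hx := heq x 0
        simp only [add_zero, sub_zero, h, mul_zero] at hx
        have : φ x = 0 := by linear_combination hx
        simpa using this
      · exact sub_eq_zero.mp h
    -- φ even
    have heven : ∀ x : ℝ, φ (-x) = φ x := by
      intro x
      have h := heq 0 x
      simp only [zero_add, zero_sub, h0, one_mul] at h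
      linear_combination 2 * h
    by_cases hcase : ∀ y : ℝ, φ y ^ 2 = 1
    · -- φ ≡ 1
      refine ⟨0, fun x => ?_⟩
      have hpm : ∀ y : ℝ, φ y = 1 ∨ φ y = -1 := by
        intro y
        have : (φ y - 1) * (φ y + 1) = 0 := by linear_combination hcase y
        rcases mul_eq_zero.mp this with h | h
        · exact Or.inl (sub_eq_zero.mp h)
        · exact Or.inr (eq_neg_of_add_eq_zero_left h)
      have hS : {x : ℝ | φ x = 1} = Set.univ := by
        have hSball : {x : ℝ | φ x = 1} = φ ⁻¹' Metric.ball 1 1 := by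
          ext z
          simp only [Set.mem_setOf_eq, Set.mem_preimage, Metric.mem_ball]
          constructor
          · intro h; rw [h]; simp
          · intro h
            rcases hpm z with h1 | h1
            · exact h1
            · exfalso
              rw [h1] at h
              have : dist (-1 : ℂ) 1 = 2 := by
                rw [Complex.dist_eq]
                norm_num
              rw [this] at h
              linarith
        have hopen : IsOpen {x : ℝ | φ x = 1} := by
          rw [hSball]; exact Metric.isOpen_ball.preimage hcont
        have hclosed : IsClosed {x : ℝ | φ x = 1} :=
          isClosed_eq hcont continuous_const
        rcases isClopen_iff.mp ⟨hclosed, hopen⟩ with h | h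
        · exfalso
          have : (0:ℝ) ∈ {x : ℝ | φ x = 1} := h0
          rw [h] at this
          exact this
        · exact h
      have : x ∈ {x : ℝ | φ x = 1} := by rw [hS]; trivial
      simp only [Set.mem_setOf_eq] at this
      rw [this]
      simp
    · push_neg at hcase
      obtain ⟨y0, hy0⟩ := hcase
      set c : ℂ := φ y0 with hc
      obtain ⟨s, hs⟩ := IsAlgClosed.exists_pow_nat_eq (k := ℂ) (c ^ 2 - 1) (n := 2) (by norm_num)
      have hsne : s ≠ 0 := by
        intro h
        rw [h] at hs
        apply sub_ne_zero.mpr hy0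
        simpa using hs.symm
      set w : ℝ → ℂ := fun x => φ (x + y0) - φ x * c with hw
      -- sine addition law
      have L1 : ∀ x y : ℝ, w (x + y) = w x * φ y + φ x * w y := by
        intro x y
        have EB1 := heq x (y + y0)
        rw [show x + (y + y0) = x + y + y0 by ring, show x - (y + y0) = x - y - y0 by ring] at EB1
        have EC1 := heq (x + y0) y
        rw [show x + y0 + y = x + y + y0 by ring, show x + y0 - y = x - y + y0 by ring] at EC1
        have ED := heq x y
        have EM := heq (x - y) y0
        rw [show x - y + y0 = x - y + y0 by ring, show x - y - y0 = x - y - y0 by ring] at EM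
        simp only [hw]
        linear_combination EB1 + EC1 - EM - 2 * c * ED
      -- product formula
      have L2 : ∀ x y : ℝ, w x * w y = (c ^ 2 - 1) * (φ (x + y) - φ x * φ y) := by
        intro x y
        have EA := heq (x + y0) (y + y0)
        rw [show x + y0 + (y + y0) = x + y + 2 * y0 by ring,
          show x + y0 - (y + y0) = x - y by ring] at EA
        have EB1 := heq x (y + y0)
        rw [show x + (y + y0) = x + y + y0 by ring, show x - (y + y0) = x - y - y0 by ring] at EB1
        have EC1 := heq (x + y0) y
        rw [show x + y0 + y = x + y + y0 by ring, show x + y0 - y = x - y + y0 by ring] at EC1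
        have ED := heq x y
        have EM := heq (x - y) y0
        have EPP := heq (x + y + y0) y0
        rw [show x + y + y0 + y0 = x + y + 2 * y0 by ring,
          show x + y + y0 - y0 = x + y by ring] at EPP
        simp only [hw]
        linear_combination (-1 : ℂ) * EA + c * EB1 + c * EC1 + (1 - 2 * c ^ 2) * ED - c * EM + EPP
      set g : ℝ → ℂ := fun x => φ x + w x / s with hg
      have hgmul : ∀ x y : ℝ, g (x + y) = g x * g y := by
        intro x y
        have h1 := L1 x y
        have h2 := L2 x y
        have hc1 : c ^ 2 - 1 ≠ 0 := sub_ne_zero.mpr hy0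
        have e1 : g (x + y) = φ (x + y) + w (x + y) / s := rfl
        have e2 : g x * g y
            = φ x * φ y + (w x * φ y + φ x * w y) / s + (w x * w y) / s ^ 2 := by
          simp only [hg]
          field_simp
          ring
        rw [e1, e2, h1, h2, hs, mul_div_cancel_left₀ _ hc1]
        ring
      have hgc : Continuous g := by
        apply hcont.add
        apply Continuous.div_const
        exact (hcont.comp (continuous_id.add continuous_const)).sub (hcont.mul continuous_const)
      have hg0 : g 0 = 1 := by
        simp only [hg, hw, zero_add, h0, one_mul, ← hc, sub_self, zero_div, add_zero]
      obtain ⟨k, hk⟩ := cauchy_exp_aux g hgc hg0 hgmul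
      refine ⟨-Complex.I * k, fun x => ?_⟩
      have hodd : w (-x) = -w x := by
        have := heq x y0
        simp only [hw, heven]
        rw [show -x + y0 = -(x - y0) by ring, heven]
        linear_combination 2 * this
      have hphi : φ x = (g x + g (-x)) / 2 := by
        simp only [hg, hodd]
        rw [heven x]
        ring
      rw [hphi, hk x, hk (-x), Complex.ofReal_neg, mul_neg, Complex.cos]
      rw [show -Complex.I * k * (x : ℂ) * Complex.I = k * (x : ℂ) from by
          linear_combination (-(k * ((x : ℝ) : ℂ))) * Complex.I_sq,
        show -(-Complex.I * k * ((x : ℝ) : ℂ)) * Complex.I = -(k * (x : ℂ)) from by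
          linear_combination (k * ((x : ℝ) : ℂ)) * Complex.I_sq]
  · rintro ⟨l, hl⟩ x y
    simp only [hl]
    push_cast
    rw [mul_add, mul_sub, Complex.cos_add, Complex.cos_sub]
    ring
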